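/- Let X be a set, f : X → X a function, and let Y ⊆ X and m, r ∈ ℕ be such that for every x ∈ X, the set {x, f(x), ..., f^{2r}(x)} contains at most one point of Y and the set {f(x), ..., f^m(x)} contains at least one point of Y. Define g : X → Y by g(x) = f^i(x) for the least i > 0 with f^i(x) ∈ Y, and define the equivalence relation E by x E y iff g(f^r(x)) = g(f^r(y)). Then every E-class has diameter at most 2(m + 3r) in the graph metric of the graph Γ_f (where x is adjacent to y iff f(x) = y or f(y) = x and x ≠ y), and for every x ∈ X the closed ball B(x; r) in the graph metric meets at most 2 classes of E. -/

import Mathlib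

/-- The graph `Γ_f` of a function `f`: `x` adjacent to `y` iff `x ≠ y` and
`f x = y` or `f y = x`. -/
def graphOf {X : Type*} (f : X → X) : SimpleGraph X where
  Adj x y := x ≠ y ∧ (f x = y ∨ f y = x)
  symm := ⟨fun _ _ h => ⟨h.1.symm, h.2.symm⟩⟩
  loopless := ⟨fun _ h => h.1 rfl⟩

/-- There is a walk of length at most `k` from `x` to `f^[k] x`. -/
lemma graphOf_fwalk {X : Type*} (f : X → X) (x : X) (k : ℕ) :
    ∃ p : (graphOf f).Walk x (f^[k] x), p.length ≤ k := by
  induction k with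
  | zero => exact ⟨SimpleGraph.Walk.nil, le_refl _⟩
  | succ k ih =>
    obtain ⟨p, hp⟩ := ih
    by_cases hEq : f^[k] x = f^[k + 1] x
    · exact ⟨p.copy rfl hEq, by rw [SimpleGraph.Walk.length_copy]; omega⟩
    · refine ⟨p.concat (show (graphOf f).Adj (f^[k] x) (f^[k + 1] x) from ⟨hEq, Or.inl (Function.iterate_succ_apply' f k x).symm⟩), ?_⟩
      rw [SimpleGraph.Walk.length_concat]; omega

/-- Along any walk in `graphOf f`, the orbits of the endpoints meet. -/
lemma graphOf_meet {X : Type*} (f : X → X) {x y : X} (w : (graphOf f).Walk x y) :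
    ∃ a b : ℕ, a + b ≤ w.length ∧ f^[a] x = f^[b] y := by
  induction w with
  | nil => exact ⟨0, 0, by simp, rfl⟩
  | @cons u v y h p ih =>
    obtain ⟨a, b, hab, he⟩ := ih
    rcases h.2 with h' | h'
    · refine ⟨a + 1, b, ?_, ?_⟩
      · rw [SimpleGraph.Walk.length_cons]; omega
      · rw [Function.iterate_succ_apply, h', he]
    · refine ⟨a, b + 1, ?_, ?_⟩
      · rw [SimpleGraph.Walk.length_cons]; omega
      · calc f^[a] u = f^[a] (f v) := by rw [h']
          _ = f (f^[a] v) := by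
              rw [← Function.iterate_succ_apply, Function.iterate_succ_apply']
          _ = f^[b + 1] y := by rw [he, Function.iterate_succ_apply']

/-- Uniqueness of the minimal return time. -/
lemma retUniq {X : Type*} (f : X → X) (Y : Set X) (z : X) (i i' : ℕ)
    (hi0 : 0 < i) (hiY : f^[i] z ∈ Y) (himin : ∀ j : ℕ, 0 < j → j < i → f^[j] z ∉ Y)
    (hi0' : 0 < i') (hiY' : f^[i'] z ∈ Y)
    (himin' : ∀ j : ℕ, 0 < j → j < i' → f^[j] z ∉ Y) : i = i' := by
  rcases lt_trichotomy i i' with h | h | h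
  · exact absurd hiY (himin' i hi0 h)
  · exact h
  · exact absurd hiY' (himin i' hi0' h)

/-- Key dichotomy: if first returns from `f^[s] x` and `f^[s'] x` (with `s ≤ s' ≤ 2r`)
give different `g`-values, then the first return from `s` lands within `[s, s']` and the
first return from `s'` escapes beyond `2r`. -/
lemma retHelper {X : Type*} (f : X → X) (Y : Set X) (r : ℕ)
    (h1 : ∀ (x : X) (i j : ℕ), i ≤ 2 * r → j ≤ 2 * r →
      f^[i] x ∈ Y → f^[j] x ∈ Y → f^[i] x = f^[j] x)
    (g : X → X)
    (hg : ∀ x : X, ∃ i : ℕ, 0 < i ∧ g x = f^[i] x ∧ f^[i] x ∈ Y ∧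
      ∀ j : ℕ, 0 < j → j < i → f^[j] x ∉ Y)
    (x : X) (s s' : ℕ) (hss' : s ≤ s') (hs' : s' ≤ 2 * r)
    (hne : g (f^[s] x) ≠ g (f^[s'] x)) :
    ∃ i i' : ℕ,
      (0 < i ∧ g (f^[s] x) = f^[s + i] x ∧ f^[s + i] x ∈ Y ∧ s + i ≤ s' ∧
        ∀ j : ℕ, 0 < j → j < i → f^[j] (f^[s] x) ∉ Y) ∧
      (0 < i' ∧ g (f^[s'] x) = f^[s' + i'] x ∧ f^[s' + i'] x ∈ Y ∧ 2 * r < s' + i' ∧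
        ∀ j : ℕ, 0 < j → j < i' → f^[j] (f^[s'] x) ∉ Y) := by
  obtain ⟨i, hi0, hgi, hiY, himin⟩ := hg (f^[s] x)
  obtain ⟨i', hi0', hgi', hiY', himin'⟩ := hg (f^[s'] x)
  have hadd : ∀ (t u : ℕ), f^[u] (f^[t] x) = f^[t + u] x := by
    intro t u
    rw [add_comm, Function.iterate_add_apply]
  rw [hadd] at hgi hiY hgi' hiY'
  have hkey : s + i ≤ s' := by
    by_contra hc
    push_neg at hc
    -- show s + i = s' + i'
    have h1' : s' + i' ≤ s + i := by
      by_contra hc2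
      push_neg at hc2
      have hj0 : 0 < s + i - s' := by omega
      have hjlt : s + i - s' < i' := by omega
      have : f^[s + i - s'] (f^[s'] x) ∈ Y := by
        rw [hadd]
        have : s' + (s + i - s') = s + i := by omega
        rw [this]; exact hiY
      exact himin' _ hj0 hjlt this
    have h2' : s + i ≤ s' + i' := by
      by_contra hc2
      push_neg at hc2
      have hj0 : 0 < s' + i' - s := by omega
      have hjlt : s' + i' - s < i := by omega
      have : f^[s' + i' - s] (f^[s] x) ∈ Y := by
        rw [hadd]
        have : s + (s' + i' - s) = s' + i' := by omega
        rw [this]; exact hiY'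
      exact himin _ hj0 hjlt this
    have heq : s + i = s' + i' := le_antisymm h2' h1'
    exact hne (by rw [hgi, hgi', heq])
  refine ⟨i, i', ⟨hi0, hgi, hiY, hkey, himin⟩, hi0', hgi', hiY', ?_, himin'⟩
  by_contra hc
  push_neg at hc
  exact hne (by rw [hgi, hgi', h1 x (s + i) (s' + i') (by omega) hc hiY hiY'])

/-- Among shifts `s ≤ s' ≤ s'' ≤ 2r`, three pairwise distinct `g`-values are impossible. -/
lemma retThree {X : Type*} (f : X → X) (Y : Set X) (r : ℕ)
    (h1 : ∀ (x : X) (i j : ℕ), i ≤ 2 * r → j ≤ 2 * r →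
      f^[i] x ∈ Y → f^[j] x ∈ Y → f^[i] x = f^[j] x)
    (g : X → X)
    (hg : ∀ x : X, ∃ i : ℕ, 0 < i ∧ g x = f^[i] x ∧ f^[i] x ∈ Y ∧
      ∀ j : ℕ, 0 < j → j < i → f^[j] x ∉ Y)
    (x : X) (a b c : ℕ) (hab : a ≤ b) (hbc : b ≤ c) (hc : c ≤ 2 * r)
    (h₁ : g (f^[a] x) ≠ g (f^[b] x)) (h₂ : g (f^[b] x) ≠ g (f^[c] x)) : False := by
  obtain ⟨i, i', ⟨-, -, -, -, -⟩, hi0', -, hiY', hbig, hmin'⟩ :=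
    retHelper f Y r h1 g hg x a b hab (hbc.trans hc) h₁
  obtain ⟨j, j', ⟨hj0, -, hjY, hsmall, hjmin⟩, -, -, -, -, -⟩ :=
    retHelper f Y r h1 g hg x b c hbc hc h₂
  have hij : i' = j := by
    refine retUniq f Y (f^[b] x) i' j hi0' ?_ hmin' hj0 ?_ hjmin
    · rw [add_comm b i', Function.iterate_add_apply] at hiY'; exact hiY'
    · rw [add_comm b j, Function.iterate_add_apply] at hjY; exact hjY
  omega

/-- Recurrence-based equivalence relation has classes of bounded diameter and
balls of radius `r` meet at most 2 classes. -/
theorem stmt14 {X : Type*} (f : X → X) (Y : Set X) (m r : ℕ)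
    (h1 : ∀ (x : X) (i j : ℕ), i ≤ 2 * r → j ≤ 2 * r →
      f^[i] x ∈ Y → f^[j] x ∈ Y → f^[i] x = f^[j] x)
    (h2 : ∀ x : X, ∃ i : ℕ, 1 ≤ i ∧ i ≤ m ∧ f^[i] x ∈ Y)
    (g : X → X)
    (hg : ∀ x : X, ∃ i : ℕ, 0 < i ∧ g x = f^[i] x ∧ f^[i] x ∈ Y ∧
      ∀ j : ℕ, 0 < j → j < i → f^[j] x ∉ Y) :
    (∀ x y : X, g (f^[r] x) = g (f^[r] y) →
      (graphOf f).Reachable x y ∧ (graphOf f).dist x y ≤ 2 * (m + 3 * r)) ∧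
    (∀ x : X, ∃ z₁ z₂ : X, ∀ y : X,
      (graphOf f).Reachable x y → (graphOf f).dist x y ≤ r →
      g (f^[r] y) = g (f^[r] z₁) ∨ g (f^[r] y) = g (f^[r] z₂)) := by
  -- g (f^[r] z) = f^[k] z for some k with r < k ≤ r + m
  have hgk : ∀ z : X, ∃ k : ℕ, k ≤ r + m ∧ g (f^[r] z) = f^[k] z := by
    intro z
    obtain ⟨i, hi0, hgi, hiY, himin⟩ := hg (f^[r] z)
    obtain ⟨j, hj1, hjm, hjY⟩ := h2 (f^[r] z)
    have him : i ≤ j := by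
      by_contra hc
      push_neg at hc
      exact himin j hj1 hc hjY
    refine ⟨r + i, by omega, ?_⟩
    rw [hgi, add_comm r i, Function.iterate_add_apply]
  constructor
  · intro x y hxy
    obtain ⟨kx, hkx, hgx⟩ := hgk x
    obtain ⟨ky, hky, hgy⟩ := hgk y
    have hmeetEq : f^[kx] x = f^[ky] y := by rw [← hgx, ← hgy, hxy]
    obtain ⟨p, hp⟩ := graphOf_fwalk f x kx
    obtain ⟨q, hq⟩ := graphOf_fwalk f y ky
    obtain ⟨q', hq'⟩ : ∃ q' : (graphOf f).Walk (f^[kx] x) y, q'.length ≤ ky :=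
      ⟨(q.copy rfl hmeetEq.symm).reverse, by
        rw [SimpleGraph.Walk.length_reverse, SimpleGraph.Walk.length_copy]; exact hq⟩
    refine ⟨⟨p.append q'⟩, ?_⟩
    have := (graphOf f).dist_le (p.append q')
    rw [SimpleGraph.Walk.length_append] at this
    omega
  · intro x
    -- every y in the ball has g (f^[r] y) = g (f^[s] x) for some s ≤ 2r
    have hball : ∀ y : X, (graphOf f).Reachable x y → (graphOf f).dist x y ≤ r →
        ∃ s : ℕ, s ≤ 2 * r ∧ g (f^[r] y) = g (f^[s] x) := by
      intro y hreach hdist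
      obtain ⟨w, hw⟩ := hreach.exists_walk_length_eq_dist
      obtain ⟨a, b, hab, he⟩ := graphOf_meet f w
      rw [hw] at hab
      have habr : a + b ≤ r := hab.trans hdist
      refine ⟨a + (r - b), by omega, ?_⟩
      have e1 : a + (r - b) = (r - b) + a := by omega
      have : f^[r] y = f^[a + (r - b)] x := by
        rw [e1, Function.iterate_add_apply, he, ← Function.iterate_add_apply]
        congr 1
        omega
      rw [this]
    by_cases hall : ∀ y : X, (graphOf f).Reachable x y → (graphOf f).dist x y ≤ r →
        g (f^[r] y) = g (f^[r] x)
    · exact ⟨x, x, fun y hre hd => Or.inl (hall y hre hd)⟩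
    · push_neg at hall
      obtain ⟨y₁, hre₁, hd₁, hne₁⟩ := hall
      refine ⟨x, y₁, fun y hre hd => ?_⟩
      by_contra hc
      push_neg at hc
      obtain ⟨hcx, hcy₁⟩ := hc
      obtain ⟨sy, hsy, hey⟩ := hball y hre hd
      obtain ⟨s₁, hs₁, he₁⟩ := hball y₁ hre₁ hd₁
      have hrx : g (f^[r] x) = g (f^[r] x) := rfl
      -- three indices: sy, r, s₁, all ≤ 2r, pairwise distinct values
      have hr2 : r ≤ 2 * r := by omega
      have hvy : g (f^[sy] x) ≠ g (f^[r] x) := by rw [← hey]; exact hcx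
      have hvy₁ : g (f^[sy] x) ≠ g (f^[s₁] x) := by rw [← hey, ← he₁]; exact hcy₁
      have hvx₁ : g (f^[r] x) ≠ g (f^[s₁] x) := by rw [← he₁]; exact fun h => hne₁ h.symm
      -- sort and apply retThree
      rcases le_total sy r with h₁ | h₁ <;> rcases le_total r s₁ with h₂ | h₂ <;>
        rcases le_total sy s₁ with h₃ | h₃
      · exact retThree f Y r h1 g hg x sy r s₁ h₁ h₂ hs₁ hvy hvx₁
      · exact retThree f Y r h1 g hg x sy r s₁ h₁ h₂ hs₁ hvy hvx₁
      · exact retThree f Y r h1 g hg x sy s₁ r h₃ h₂ hr2 hvy₁ hvx₁.symm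
      · exact retThree f Y r h1 g hg x s₁ sy r h₃ h₁ hr2 hvy₁.symm hvy
      · exact retThree f Y r h1 g hg x r sy s₁ h₁ h₃ hs₁ hvy.symm hvy₁
      · exact retThree f Y r h1 g hg x r s₁ sy h₂ h₃ hsy hvx₁ hvy₁.symm
      · exact retThree f Y r h1 g hg x s₁ r sy h₂ h₁ hsy hvx₁.symm hvy.symm
      · exact retThree f Y r h1 g hg x s₁ r sy h₂ h₁ hsy hvx₁.symm hvy.symm
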